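/- For any finite graph G and any disjoint vertex sets S, T ⊆ V(G), the quantity δ_G(S,T) := 2|S| + Σ_{v∈T} deg_{G−S}(v) − 2|T| − h_G(S,T) is even, where h_G(S,T) is the number of components C of G − (S ∪ T) with e_G(C,T) odd. -/

import Mathlib

open SimpleGraph

namespace VizingTwoFactor

variable {V : Type*}

/-- The degree of a vertex, as the `ncard` of its neighbor set. -/
noncomputable def ndeg (G : SimpleGraph V) (v : V) : ℕ :=
  (G.neighborSet v).ncard

/-- `G` is bipartite with parts `X` and `T`. -/
def IsBipartiteWith (G : SimpleGraph V) (X T : Set V) : Prop :=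
  Disjoint X T ∧ ∀ u v : V, G.Adj u v → (u ∈ X ∧ v ∈ T) ∨ (u ∈ T ∧ v ∈ X)

/-- The set of neighbors of a set of vertices. -/
def NSet (G : SimpleGraph V) (A : Set V) : Set V :=
  {v | ∃ a ∈ A, G.Adj a v}

/-- `G` has a matching saturating the vertex set `T`. -/
def HasMatchingSaturating (G : SimpleGraph V) (T : Set V) : Prop :=
  ∃ M : G.Subgraph, M.IsMatching ∧ T ⊆ M.verts

/-- Number of (ordered) adjacent pairs with first coordinate in `A` and second in `B`;
for disjoint `A`, `B` this is the number of edges between `A` and `B`. -/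
noncomputable def eBetween (G : SimpleGraph V) (A B : Set V) : ℕ :=
  {p : V × V | p.1 ∈ A ∧ p.2 ∈ B ∧ G.Adj p.1 p.2}.ncard

/-- Number of neighbors of `v` inside `A`. -/
noncomputable def degIn (G : SimpleGraph V) (A : Set V) (v : V) : ℕ :=
  (G.neighborSet v ∩ A).ncard

/-- The vertex set (in `V`) of a connected component of an induced subgraph. -/
def csupp (G : SimpleGraph V) (U : Set V) (C : (G.induce U).ConnectedComponent) : Set V :=
  Subtype.val '' C.supp

/-- The odd components of `G − (S ∪ T)` w.r.t. `(S,T)`: components sending an odd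
number of edges to `T`. -/
noncomputable def oddComps (G : SimpleGraph V) (S T : Set V) :
    Set ((G.induce (S ∪ T)ᶜ).ConnectedComponent) :=
  {C | Odd (eBetween G (csupp G (S ∪ T)ᶜ C) T)}

/-- `h_G(S,T)`: the number of odd components. -/
noncomputable def hNum (G : SimpleGraph V) (S T : Set V) : ℕ :=
  (oddComps G S T).ncard

/-- `δ_G(S,T) = 2|S| + Σ_{v∈T} deg_{G−S}(v) − 2|T| − h_G(S,T)`. -/
noncomputable def deltaST (G : SimpleGraph V) (S T : Set V) : ℤ :=
  2 * S.ncard + (∑ᶠ v ∈ T, (degIn G Sᶜ v : ℤ)) - 2 * T.ncard - hNum G S T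

/-- A barrier. -/
def IsBarrier (G : SimpleGraph V) (S T : Set V) : Prop :=
  Disjoint S T ∧ deltaST G S T ≤ -2

/-- A minimum barrier: minimizes `|S ∪ T|` among barriers. -/
def IsMinBarrier (G : SimpleGraph V) (S T : Set V) : Prop :=
  IsBarrier G S T ∧ ∀ S' T' : Set V, IsBarrier G S' T' → (S ∪ T).ncard ≤ (S' ∪ T').ncard

/-- `G` has a 2-factor: a spanning subgraph in which every vertex has degree 2. -/
def HasTwoFactor (G : SimpleGraph V) : Prop :=
  ∃ H : SimpleGraph V, H ≤ G ∧ ∀ v : V, ndeg H v = 2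

/-- `G` has a proper edge coloring with `k` colors. -/
def HasEdgeColoring (G : SimpleGraph V) (k : ℕ) : Prop :=
  ∃ f : G.edgeSet → Fin k, ∀ e₁ e₂ : G.edgeSet, e₁ ≠ e₂ →
    (∃ v : V, v ∈ (e₁ : Sym2 V) ∧ v ∈ (e₂ : Sym2 V)) → f e₁ ≠ f e₂

/-- The chromatic index `χ'(G)`. -/
noncomputable def chromIdx (G : SimpleGraph V) : ℕ :=
  sInf {k | HasEdgeColoring G k}

/-- `Δ` is the maximum degree of `G`. -/
def IsMaxDegree (G : SimpleGraph V) (Δ : ℕ) : Prop :=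
  (∀ v : V, ndeg G v ≤ Δ) ∧ ∃ v : V, ndeg G v = Δ

/-- `G` is `Δ`-critical: no isolated vertices, maximum degree `Δ`, `χ'(G) = Δ + 1`, and
`χ'(G − e) = Δ` for every edge `e`. -/
def IsDeltaCritical (G : SimpleGraph V) (Δ : ℕ) : Prop :=
  (∀ v : V, ∃ u : V, G.Adj v u) ∧ IsMaxDegree G Δ ∧ chromIdx G = Δ + 1 ∧
    ∀ e ∈ G.edgeSet, chromIdx (G.deleteEdges {e}) = Δ

/-- `T` is an independent set in `G`. -/
def IsIndep (G : SimpleGraph V) (T : Set V) : Prop :=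
  ∀ u ∈ T, ∀ v ∈ T, ¬ G.Adj u v

/-- The bipartite graph `H*` consisting of the edges of `G` between `V(G) \ T` and `T`. -/
def betweenGraph (G : SimpleGraph V) (T : Set V) : SimpleGraph V where
  Adj u v := G.Adj u v ∧ ((u ∉ T ∧ v ∈ T) ∨ (u ∈ T ∧ v ∉ T))
  symm := ⟨fun u v h => ⟨h.1.symm, h.2.elim (fun h' => Or.inr ⟨h'.2, h'.1⟩)
    (fun h' => Or.inl ⟨h'.2, h'.1⟩)⟩⟩
  loopless := ⟨fun u h => G.loopless.1 u h.1⟩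


section helpers
variable [Fintype V] (G : SimpleGraph V)

/-- The pair set between `A` and `B`, as a finset. -/
noncomputable def Pf (A B : Set V) : Finset (V × V) :=
  ({p : V × V | p.1 ∈ A ∧ p.2 ∈ B ∧ G.Adj p.1 p.2}).toFinite.toFinset

lemma mem_Pf {A B : Set V} {p : V × V} :
    p ∈ Pf G A B ↔ p.1 ∈ A ∧ p.2 ∈ B ∧ G.Adj p.1 p.2 := by
  simp [Pf]

lemma eBetween_eq_Pf (A B : Set V) : eBetween G A B = (Pf G A B).card := by
  rw [eBetween, Set.ncard_eq_toFinset_card _ (Set.toFinite _)]; rfl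

lemma Pf_card_swap (A B : Set V) : (Pf G A B).card = (Pf G B A).card := by
  classical
  apply Finset.card_bij (fun p _ => Prod.swap p)
  · intro p hp; rw [mem_Pf] at hp ⊢; exact ⟨hp.2.1, hp.1, hp.2.2.symm⟩
  · intro p _ q _ h; exact Prod.swap_injective h
  · intro p hp; rw [mem_Pf] at hp
    refine ⟨Prod.swap p, ?_, rfl⟩
    rw [mem_Pf]; exact ⟨hp.2.1, hp.1, hp.2.2.symm⟩

lemma even_Pf_self (A : Set V) : Even (Pf G A A).card := by
  classical
  obtain e := Fintype.equivFin V
  have key : ((Pf G A A).filter (fun p => e p.1 < e p.2)).card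
      = ((Pf G A A).filter (fun p => e p.2 < e p.1)).card := by
    apply Finset.card_bij (fun p _ => Prod.swap p)
    · intro p hp; simp only [Finset.mem_filter, mem_Pf] at hp ⊢
      exact ⟨⟨hp.1.2.1, hp.1.1, hp.1.2.2.symm⟩, hp.2⟩
    · intro p _ q _ h; exact Prod.swap_injective h
    · intro p hp; simp only [Finset.mem_filter, mem_Pf] at hp
      refine ⟨Prod.swap p, ?_, rfl⟩
      simp only [Finset.mem_filter, mem_Pf]
      exact ⟨⟨hp.1.2.1, hp.1.1, hp.1.2.2.symm⟩, hp.2⟩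
  have split : (Pf G A A).card = ((Pf G A A).filter (fun p => e p.1 < e p.2)).card
      + ((Pf G A A).filter (fun p => e p.2 < e p.1)).card := by
    rw [← Finset.card_union_of_disjoint]
    · congr 1
      ext p
      simp only [Finset.mem_union, Finset.mem_filter, mem_Pf]
      constructor
      · intro hp
        have hne : p.1 ≠ p.2 := G.ne_of_adj hp.2.2
        have : e p.1 ≠ e p.2 := fun h => hne (e.injective h)
        rcases this.lt_or_gt with h | h
        · exact Or.inl ⟨hp, h⟩
        · exact Or.inr ⟨hp, h⟩
      · rintro (⟨h, _⟩ | ⟨h, _⟩) <;> exact h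
    · rw [Finset.disjoint_filter]
      intro p _ h1 h2
      exact absurd (h1.trans h2) (lt_irrefl _)
  rw [split, key]
  exact ⟨_, rfl⟩

/-- Sum of degrees into `A` over `T` equals the cardinality of the pair set. -/
lemma sum_degIn_eq (A T : Set V) :
    ∑ v ∈ T.toFinite.toFinset, (G.neighborSet v ∩ A).ncard = (Pf G T A).card := by
  classical
  rw [Finset.card_eq_sum_card_fiberwise (f := Prod.fst) (t := T.toFinite.toFinset)
    (fun p hp => by simpa using ((mem_Pf G).mp hp).1)]
  apply Finset.sum_congr rfl
  intro v hv
  have hvT : v ∈ T := by simpa using hv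
  rw [Set.ncard_eq_toFinset_card _ (Set.toFinite _)]
  apply Finset.card_bij (fun u _ => (v, u))
  · intro u hu
    simp only [Set.Finite.mem_toFinset, Set.mem_inter_iff, mem_neighborSet] at hu
    refine Finset.mem_filter.mpr ⟨?_, rfl⟩
    rw [mem_Pf]; exact ⟨hvT, hu.2, hu.1⟩
  · intro u _ u' _ h
    exact congrArg Prod.snd h
  · intro p hp
    simp only [Finset.mem_filter, mem_Pf] at hp
    refine ⟨p.2, ?_, ?_⟩
    · simp only [Set.Finite.mem_toFinset, Set.mem_inter_iff, mem_neighborSet]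
      exact ⟨hp.2 ▸ hp.1.2.2, hp.1.2.1⟩
    · rw [← hp.2]

lemma mem_csupp {U : Set V} {C : (G.induce U).ConnectedComponent} {v : V} :
    v ∈ csupp G U C ↔ ∃ h : v ∈ U, (G.induce U).connectedComponentMk ⟨v, h⟩ = C := by
  constructor
  · rintro ⟨⟨w, hw⟩, hsupp, rfl⟩
    exact ⟨hw, (ConnectedComponent.mem_supp_iff _ _).mp hsupp⟩
  · rintro ⟨h, hC⟩
    exact ⟨⟨v, h⟩, (ConnectedComponent.mem_supp_iff _ _).mpr hC, rfl⟩

lemma Pf_decomp (U T : Set V) [Fintype ((G.induce U).ConnectedComponent)] :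
    (Pf G U T).card = ∑ C : (G.induce U).ConnectedComponent, (Pf G (csupp G U C) T).card := by
  classical
  have hcover : Pf G U T
      = Finset.univ.biUnion (fun C => Pf G (csupp G U C) T) := by
    ext p
    simp only [Finset.mem_biUnion, Finset.mem_univ, true_and, mem_Pf, mem_csupp]
    constructor
    · rintro ⟨h1, h2, h3⟩
      exact ⟨(G.induce U).connectedComponentMk ⟨p.1, h1⟩, ⟨h1, rfl⟩, h2, h3⟩
    · rintro ⟨C, ⟨h1, _⟩, h2, h3⟩
      exact ⟨h1, h2, h3⟩
  rw [hcover, Finset.card_biUnion]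
  intro C _ D _ hCD
  simp only [Function.onFun]
  rw [Finset.disjoint_left]
  intro p hpC hpD
  rw [mem_Pf, mem_csupp] at hpC hpD
  obtain ⟨⟨h1, hC⟩, -, -⟩ := hpC
  obtain ⟨⟨h1', hD⟩, -, -⟩ := hpD
  exact hCD (hC ▸ hD ▸ rfl)

end helpers

theorem vizing_stmt_5 [Fintype V] (G : SimpleGraph V) (S T : Set V)
    (hdisj : Disjoint S T) : Even (deltaST G S T) := by
  classical
  haveI : Fintype ((G.induce (S ∪ T)ᶜ).ConnectedComponent) := Fintype.ofFinite _
  have hscompl : Sᶜ = T ∪ (S ∪ T)ᶜ := by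
    ext x
    simp only [Set.mem_compl_iff, Set.mem_union, not_or]
    constructor
    · intro hx
      by_cases hxT : x ∈ T
      · exact Or.inl hxT
      · exact Or.inr ⟨hx, hxT⟩
    · rintro (hx | ⟨hx, _⟩)
      · exact fun hS => (Set.disjoint_left.mp hdisj hS) hx
      · exact hx
  have hdisjTU : Disjoint T (S ∪ T)ᶜ := by
    rw [Set.disjoint_left]
    intro x hx hx'
    exact hx' (Or.inr hx)
  have hpoint : ∀ v, degIn G Sᶜ v = degIn G T v + degIn G (S ∪ T)ᶜ v := by
    intro v
    rw [degIn, degIn, degIn, hscompl, Set.inter_union_distrib_left,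
      Set.ncard_union_eq (hdisjTU.mono Set.inter_subset_right Set.inter_subset_right)
        (Set.toFinite _) (Set.toFinite _)]
  have hfin : (∑ᶠ v ∈ T, (degIn G Sᶜ v : ℤ))
      = ((∑ v ∈ T.toFinite.toFinset, degIn G Sᶜ v : ℕ) : ℤ) := by
    have h := finsum_mem_coe_finset (fun v => (degIn G Sᶜ v : ℤ)) T.toFinite.toFinset
    rw [T.toFinite.coe_toFinset] at h
    rw [h, Nat.cast_sum]
  set N := ∑ v ∈ T.toFinite.toFinset, degIn G Sᶜ v with hN
  have hNsplit : N = (Pf G T T).card + (Pf G T (S ∪ T)ᶜ).card := by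
    rw [hN]
    simp only [hpoint]
    simp only [degIn]
    rw [Finset.sum_add_distrib, sum_degIn_eq, sum_degIn_eq]
  have hPUT : (Pf G T (S ∪ T)ᶜ).card
      = ∑ C : (G.induce (S ∪ T)ᶜ).ConnectedComponent,
          (Pf G (csupp G (S ∪ T)ᶜ C) T).card := by
    rw [Pf_card_swap, Pf_decomp]
  have hhNum : hNum G S T
      = (Finset.univ.filter (fun C : (G.induce (S ∪ T)ᶜ).ConnectedComponent
          => Odd ((Pf G (csupp G (S ∪ T)ᶜ C) T).card))).card := by
    rw [hNum, Set.ncard_eq_toFinset_card _ (Set.toFinite _)]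
    congr 1
    ext C
    simp [oddComps, eBetween_eq_Pf]
  have key : Even N ↔ Even (hNum G S T) := by
    rw [hNsplit, hPUT, Nat.even_add, hhNum, ← Finset.even_sum_iff_even_card_odd]
    have := even_Pf_self G T
    tauto
  have hdelta : deltaST G S T
      = (2 * (S.ncard : ℤ) - 2 * (T.ncard : ℤ)) + ((N : ℤ) - (hNum G S T : ℤ)) := by
    rw [deltaST, hfin]; ring
  rw [hdelta]
  have h2 : Even (2 * (S.ncard : ℤ) - 2 * (T.ncard : ℤ)) := by
    refine Even.sub ⟨(S.ncard : ℤ), ?_⟩ ⟨(T.ncard : ℤ), ?_⟩ <;> ring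
  have h3 : Even ((N : ℤ) - (hNum G S T : ℤ)) := by
    rw [Int.even_sub]
    simpa using key
  exact h2.add h3


end VizingTwoFactor
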